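/- Let A be an algebra with mean value on ℝ^N. For μ ∈ Δ(A) and f ∈ A define T_μ f(x) = μ(τ_x f), where τ_x f = f(·+x). Then A is introverted (i.e. T_μ(A) ⊆ A for all μ ∈ Δ(A)) if and only if for every f ∈ A, the closure in the topology of pointwise convergence of the orbit {τ_a f : a ∈ ℝ^N} within BUC(ℝ^N) is contained in A. -/

import Mathlib

open MeasureTheory Filter Topology
open scoped ENNReal NNReal

noncomputable section

abbrev RN (N : ℕ) := Fin N → ℝ

/-- `f` is a bounded uniformly continuous function on `ℝ^N`. -/
def IsBUC {N : ℕ} (f : RN N → ℂ) : Prop :=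
  Bornology.IsBounded (Set.range f) ∧ UniformContinuous f

/-- `f` has mean value `M`: the rescalings `x ↦ f (x/ε)` converge to the constant `M`
weakly-* in `L∞(ℝ^N)`, i.e. tested against every integrable function. -/
def HasMeanValue {N : ℕ} (f : RN N → ℂ) (M : ℂ) : Prop :=
  ∀ φ : RN N → ℂ, Integrable φ →
    Tendsto (fun ε : ℝ => ∫ x, f (ε⁻¹ • x) * φ x) (𝓝[>] (0:ℝ)) (𝓝 (M * ∫ x, φ x))

/-- An algebra with mean value on `ℝ^N`: a closed (under uniform convergence)
subalgebra of BUC(ℝ^N) containing the constants, stable under complex conjugation,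
translation invariant, all of whose elements possess a mean value. -/
structure MVAlgebra (N : ℕ) where
  carrier : Set (RN N → ℂ)
  buc : ∀ f ∈ carrier, IsBUC f
  const_mem : ∀ c : ℂ, (fun _ => c) ∈ carrier
  add_mem : ∀ f ∈ carrier, ∀ g ∈ carrier, f + g ∈ carrier
  mul_mem : ∀ f ∈ carrier, ∀ g ∈ carrier, f * g ∈ carrier
  smul_mem : ∀ (c : ℂ), ∀ f ∈ carrier, c • f ∈ carrier
  conj_mem : ∀ f ∈ carrier, (fun x => (starRingEnd ℂ) (f x)) ∈ carrier
  translate_mem : ∀ f ∈ carrier, ∀ a : RN N, (fun x => f (x + a)) ∈ carrier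
  closed : ∀ f : RN N → ℂ,
    (∀ ε : ℝ, 0 < ε → ∃ g ∈ carrier, ∀ x, ‖f x - g x‖ ≤ ε) → f ∈ carrier
  mean_value : ∀ f ∈ carrier, ∃ M : ℂ, HasMeanValue f M

/-- A character of `A`: a multiplicative linear functional on `A`, nonzero
(normalized by `μ 1 = 1`), automatically bounded, extended by zero off `A`.
The set of characters is the spectrum `Δ(A)`. -/
def IsCharacter {N : ℕ} (A : MVAlgebra N) (μ : (RN N → ℂ) → ℂ) : Prop :=
  (∀ f ∈ A.carrier, ∀ g ∈ A.carrier, μ (f + g) = μ f + μ g) ∧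
  (∀ (c : ℂ), ∀ f ∈ A.carrier, μ (c • f) = c * μ f) ∧
  (∀ f ∈ A.carrier, ∀ g ∈ A.carrier, μ (f * g) = μ f * μ g) ∧
  μ (fun _ => (1:ℂ)) = 1 ∧
  (∀ f, f ∉ A.carrier → μ f = 0) ∧
  (∀ f ∈ A.carrier, ∀ C : ℝ, (∀ x, ‖f x‖ ≤ C) → ‖μ f‖ ≤ C)

/-- The spectrum `Δ(A)` of `A`, carrying the weak-* (pointwise convergence) topology. -/
abbrev Spectrum' {N : ℕ} (A : MVAlgebra N) :=
  {μ : (RN N → ℂ) → ℂ // IsCharacter A μ}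

open Classical in
/-- The Dirac mass at `y`, as a functional (evaluation at `y` on `A`, zero off `A`). -/
def diracFun {N : ℕ} (A : MVAlgebra N) (y : RN N) : (RN N → ℂ) → ℂ :=
  fun f => if f ∈ A.carrier then f y else 0

/-- `A` is introverted: `T_μ f (x) = μ (τ_x f)` belongs to `A` for every
character `μ` and every `f ∈ A`. -/
def Introverted {N : ℕ} (A : MVAlgebra N) : Prop :=
  ∀ μ : Spectrum' A, ∀ f ∈ A.carrier,
    (fun x => μ.1 (fun z => f (z + x))) ∈ A.carrier

/-- `mul` is the Arens product on `Δ(A)`: `(μν)(f) = μ (T_ν f)` where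
`T_ν f (x) = ν (f (· + x))`. -/
def IsArensMul {N : ℕ} (A : MVAlgebra N)
    (mul : Spectrum' A → Spectrum' A → Spectrum' A) : Prop :=
  ∀ μ ν : Spectrum' A, ∀ f ∈ A.carrier,
    (mul μ ν).1 f = μ.1 (fun x => ν.1 (fun z => f (z + x)))

/-- The kernel `K(Δ(A)) = ⋂_{s} s·Δ(A)` of the semigroup `Δ(A)`. -/
def kern {N : ℕ} {A : MVAlgebra N}
    (mul : Spectrum' A → Spectrum' A → Spectrum' A) : Set (Spectrum' A) :=
  ⋂ s : Spectrum' A, Set.range (mul s)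


namespace MVProof

variable {N : ℕ}

lemma sum_mem (A : MVAlgebra N) {ι : Type*} (s : Finset ι) (g : ι → RN N → ℂ)
    (hg : ∀ i ∈ s, g i ∈ A.carrier) : (∑ i ∈ s, g i) ∈ A.carrier := by
  classical
  induction s using Finset.induction_on with
  | empty => exact A.const_mem 0
  | @insert a s ha ih =>

    rw [Finset.sum_insert ha]
    exact A.add_mem _ (hg a (Finset.mem_insert_self _ _)) _
      (ih fun i hi => hg i (Finset.mem_insert_of_mem hi))

lemma char_const {A : MVAlgebra N} {μ : (RN N → ℂ) → ℂ} (hμ : IsCharacter A μ) (c : ℂ) :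
    μ (fun _ => c) = c := by
  have h1 : (fun _ : RN N => c) = c • (fun _ : RN N => (1:ℂ)) := by funext x; simp
  rw [h1, hμ.2.1 c _ (A.const_mem 1), hμ.2.2.2.1, mul_one]

lemma char_sum {A : MVAlgebra N} {μ : (RN N → ℂ) → ℂ} (hμ : IsCharacter A μ)
    {ι : Type*} (s : Finset ι) (g : ι → RN N → ℂ) (hg : ∀ i ∈ s, g i ∈ A.carrier) :
    μ (∑ i ∈ s, g i) = ∑ i ∈ s, μ (g i) := by
  classical
  induction s using Finset.induction_on with
  | empty =>
    simp only [Finset.sum_empty]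
    exact char_const hμ 0
  | @insert a s ha ih =>

    have hga := hg a (Finset.mem_insert_self _ _)
    have hgs : ∀ i ∈ s, g i ∈ A.carrier := fun i hi => hg i (Finset.mem_insert_of_mem hi)
    rw [Finset.sum_insert ha, Finset.sum_insert ha,
      hμ.1 _ hga _ (sum_mem A s g hgs), ih hgs]

end MVProof

namespace MVProof
variable {N : ℕ}

lemma inv_mem (A : MVAlgebra N) {h : RN N → ℂ} (hh : h ∈ A.carrier) {δ M : ℝ}
    (hδ : 0 < δ) (hb : ∀ x, ∃ t : ℝ, h x = t ∧ δ ≤ t ∧ t ≤ M) :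
    (fun x => (h x)⁻¹) ∈ A.carrier := by
  have hδM : δ ≤ M := by
    obtain ⟨t, _, h1, h2⟩ := hb (fun _ => 0)
    exact h1.trans h2
  have hM : 0 < M := hδ.trans_le hδM
  set p : RN N → ℂ := (fun _ => (1:ℂ)) + (-(M:ℂ)⁻¹) • h with hp
  have hpx : ∀ x, p x = 1 - (M:ℂ)⁻¹ * h x := by
    intro x
    simp only [hp, Pi.add_apply, Pi.smul_apply, smul_eq_mul]
    ring
  have hpmem : p ∈ A.carrier := A.add_mem _ (A.const_mem 1) _ (A.smul_mem _ _ hh)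
  have hpow : ∀ n, p ^ n ∈ A.carrier := by
    intro n; induction n with
    | zero => exact A.const_mem 1
    | succ n ih => rw [pow_succ]; exact A.mul_mem _ ih _ hpmem
  set S : ℕ → (RN N → ℂ) := fun n => (M:ℂ)⁻¹ • ∑ k ∈ Finset.range n, p ^ k with hS
  have hSmem : ∀ n, S n ∈ A.carrier :=
    fun n => A.smul_mem _ _ (sum_mem A _ _ (fun k _ => hpow k))
  have hSx : ∀ n x, S n x = (M:ℂ)⁻¹ * ∑ k ∈ Finset.range n, (p x) ^ k := by
    intro n x
    simp [hS, Finset.sum_apply, smul_eq_mul]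
  have hzne : ∀ x, h x ≠ 0 := by
    intro x
    obtain ⟨t, ht, h1, _⟩ := hb x
    rw [ht]
    exact_mod_cast ne_of_gt (hδ.trans_le h1)
  have key : ∀ x n, (h x)⁻¹ - S n x = (h x)⁻¹ * (p x) ^ n := by
    intro x n
    induction n with
    | zero => simp [hSx]
    | succ n ih =>
      have hs : S (n+1) x = S n x + (M:ℂ)⁻¹ * (p x) ^ n := by
        rw [hSx, hSx, Finset.sum_range_succ]; ring
      have hSnx : S n x = (h x)⁻¹ - (h x)⁻¹ * (p x) ^ n := by
        rw [← ih]; ring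
      have hc : (h x)⁻¹ * h x = 1 := inv_mul_cancel₀ (hzne x)
      rw [pow_succ, hs, hSnx, hpx x]
      linear_combination ((M:ℂ)⁻¹ * (1 - (M:ℂ)⁻¹ * h x) ^ n) * hc
  set r : ℝ := 1 - M⁻¹ * δ with hr
  have hr0 : 0 ≤ r := by
    rw [hr]
    have : M⁻¹ * δ ≤ M⁻¹ * M := by
      apply mul_le_mul_of_nonneg_left hδM (inv_nonneg.2 hM.le)
    rw [inv_mul_cancel₀ hM.ne'] at this
    linarith
  have hr1 : r < 1 := by
    rw [hr]
    have : 0 < M⁻¹ * δ := mul_pos (inv_pos.2 hM) hδ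
    linarith
  have bound : ∀ x n, ‖(h x)⁻¹ - S n x‖ ≤ δ⁻¹ * r ^ n := by
    intro x n
    obtain ⟨t, ht, h1, h2⟩ := hb x
    have htpos : 0 < t := hδ.trans_le h1
    have hpxr : p x = ((1 - M⁻¹ * t : ℝ) : ℂ) := by
      rw [hpx, ht]; push_cast; ring
    have hq0 : 0 ≤ 1 - M⁻¹ * t := by
      have : M⁻¹ * t ≤ M⁻¹ * M := mul_le_mul_of_nonneg_left h2 (inv_nonneg.2 hM.le)
      rw [inv_mul_cancel₀ hM.ne'] at this
      linarith
    have hqr : 1 - M⁻¹ * t ≤ r := by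
      rw [hr]
      have : M⁻¹ * δ ≤ M⁻¹ * t := mul_le_mul_of_nonneg_left h1 (inv_nonneg.2 hM.le)
      linarith
    rw [key x n, norm_mul, norm_inv, norm_pow, ht, hpxr, Complex.norm_real,
      Complex.norm_real, Real.norm_eq_abs, Real.norm_eq_abs, abs_of_pos htpos, abs_of_nonneg hq0]
    have e1 : t⁻¹ ≤ δ⁻¹ := by
      apply inv_anti₀ hδ h1
    have e2 : (1 - M⁻¹ * t) ^ n ≤ r ^ n := pow_le_pow_left₀ hq0 hqr n
    exact mul_le_mul e1 e2 (pow_nonneg hq0 n) (inv_nonneg.2 hδ.le)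
  refine A.closed _ (fun ε hε => ?_)
  have htend : Filter.Tendsto (fun n => δ⁻¹ * r ^ n) Filter.atTop (𝓝 0) := by
    simpa using (tendsto_pow_atTop_nhds_zero_of_lt_one hr0 hr1).const_mul δ⁻¹
  obtain ⟨n, hn⟩ := ((tendsto_order.1 htend).2 ε hε).exists
  exact ⟨S n, hSmem n, fun x => (bound x n).trans hn.le⟩

end MVProof

namespace MVProof
variable {N : ℕ}

lemma mem_closure_pi {g : RN N → ℂ} {s : Set (RN N → ℂ)}
    (h : ∀ (F : Finset (RN N)) (ε : ℝ), 0 < ε → ∃ u ∈ s, ∀ x ∈ F, dist (g x) (u x) < ε) :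
    g ∈ closure s := by
  rw [mem_closure_iff_nhds]
  intro t ht
  rw [nhds_pi, Filter.mem_pi] at ht
  obtain ⟨I, hIfin, V, hV, hsub⟩ := ht
  choose ε hεpos hball using fun x => Metric.mem_nhds_iff.1 (hV x)
  classical
  by_cases hne : hIfin.toFinset.Nonempty
  · obtain ⟨u, hus, hu⟩ := h hIfin.toFinset (hIfin.toFinset.inf' hne ε)
      ((Finset.lt_inf'_iff hne).2 (fun i _ => hεpos i))
    refine ⟨u, hsub (Set.mem_pi.2 fun x hxI => ?_), hus⟩
    apply hball x
    rw [Metric.mem_ball, dist_comm]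
    exact lt_of_lt_of_le (hu x (hIfin.mem_toFinset.2 hxI)) (Finset.inf'_le _ (hIfin.mem_toFinset.2 hxI))
  · obtain ⟨u, hus, -⟩ := h ∅ 1 one_pos
    refine ⟨u, hsub (Set.mem_pi.2 fun x hxI => ?_), hus⟩
    exact absurd (hIfin.mem_toFinset.2 hxI) (fun hx => hne ⟨x, hx⟩)

lemma approx (A : MVAlgebra N) (μ : Spectrum' A) {f : RN N → ℂ} (hf : f ∈ A.carrier)
    (F : Finset (RN N)) {ε : ℝ} (hε : 0 < ε) :
    ∃ a : RN N, ∀ x ∈ F, dist (μ.1 (fun z => f (z + x))) (f (x + a)) < ε := by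
  obtain ⟨hadd, hsmul, hmul, hone, hzero, hbd⟩ := μ.2
  by_contra hcon
  push_neg at hcon
  classical
  set v : RN N → RN N → ℂ := fun x => fun z => f (z + x) with hv
  have hvmem : ∀ x, v x ∈ A.carrier := fun x => A.translate_mem f hf x
  set c : RN N → ℂ := fun x => μ.1 (v x) with hc
  set u : RN N → RN N → ℂ := fun x => v x + (fun _ => -c x) with hu
  have humem : ∀ x, u x ∈ A.carrier := fun x => A.add_mem _ (hvmem x) _ (A.const_mem _)
  have hμu : ∀ x, μ.1 (u x) = 0 := by
    intro x
    rw [hu]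
    rw [hadd _ (hvmem x) _ (A.const_mem (-c x)), char_const μ.2 (-c x)]
    simp [hc]
  set w : RN N → RN N → ℂ := fun x => u x * (fun z => (starRingEnd ℂ) (u x z)) with hw
  have hwmem : ∀ x, w x ∈ A.carrier := fun x => A.mul_mem _ (humem x) _ (A.conj_mem _ (humem x))
  have hμw : ∀ x, μ.1 (w x) = 0 := fun x => by
    rw [hw, hmul _ (humem x) _ (A.conj_mem _ (humem x)), hμu x, zero_mul]
  set H : RN N → ℂ := ∑ x ∈ F, w x with hH
  have hHmem : H ∈ A.carrier := sum_mem A F w (fun x _ => hwmem x)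
  have hμH : μ.1 H = 0 := by
    rw [hH, char_sum μ.2 F w (fun x _ => hwmem x)]
    simp [hμw]
  have hHa : ∀ a, H a = ((∑ x ∈ F, Complex.normSq (u x a) : ℝ) : ℂ) := by
    intro a
    rw [hH, Finset.sum_apply]
    push_cast
    refine Finset.sum_congr rfl fun x _ => ?_
    rw [hw]
    simp [Pi.mul_apply, Complex.mul_conj]
  obtain ⟨C, hC⟩ := isBounded_iff_forall_norm_le.1 (A.buc f hf).1
  have hCf : ∀ z, ‖f z‖ ≤ C := fun z => hC _ (Set.mem_range_self z)
  have hCc : ∀ x, ‖c x‖ ≤ C := fun x => hbd _ (hvmem x) C (fun z => hCf _)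
  have huval : ∀ x a, u x a = f (a + x) - c x := by
    intro x a
    simp [hu, hv, sub_eq_add_neg]
  have hu_bd : ∀ x a, ‖u x a‖ ≤ C + C := by
    intro x a
    rw [huval]
    exact (norm_sub_le _ _).trans (add_le_add (hCf _) (hCc x))
  have hnormSq : ∀ (z : ℂ), Complex.normSq z = ‖z‖ ^ 2 := by
    intro z
    rw [Complex.normSq_eq_norm_sq]
  have hHa_le : ∀ a, ∑ x ∈ F, Complex.normSq (u x a) ≤ (F.card : ℝ) * (C + C) ^ 2 := by
    intro a
    calc ∑ x ∈ F, Complex.normSq (u x a) ≤ ∑ _x ∈ F, (C + C) ^ 2 := by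
          refine Finset.sum_le_sum fun x _ => ?_
          rw [hnormSq]
          exact pow_le_pow_left₀ (norm_nonneg _) (hu_bd x a) 2
      _ = (F.card : ℝ) * (C + C) ^ 2 := by rw [Finset.sum_const, nsmul_eq_mul]
  have hHa_ge : ∀ a, ε ^ 2 ≤ ∑ x ∈ F, Complex.normSq (u x a) := by
    intro a
    obtain ⟨x₀, hx₀F, hx₀⟩ := hcon a
    have h1 : ε ≤ ‖u x₀ a‖ := by
      calc ε ≤ dist (μ.1 (fun z => f (z + x₀))) (f (x₀ + a)) := hx₀
        _ = ‖u x₀ a‖ := by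
            rw [dist_eq_norm, huval, add_comm x₀ a, norm_sub_rev]
    have h2 : ε ^ 2 ≤ Complex.normSq (u x₀ a) := by
      rw [hnormSq]
      exact pow_le_pow_left₀ hε.le h1 2
    exact h2.trans (Finset.single_le_sum (f := fun x => Complex.normSq (u x a)) (fun x _ => Complex.normSq_nonneg _) hx₀F)
  have hK : (fun a => (H a)⁻¹) ∈ A.carrier :=
    inv_mem A hHmem (pow_pos hε 2) (fun a => ⟨_, hHa a, hHa_ge a, hHa_le a⟩)
  have hHne : ∀ a, H a ≠ 0 := by
    intro a
    rw [hHa]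
    exact_mod_cast ne_of_gt (lt_of_lt_of_le (pow_pos hε 2) (hHa_ge a))
  have hprod : H * (fun a => (H a)⁻¹) = (fun _ => (1:ℂ)) := by
    funext a
    exact mul_inv_cancel₀ (hHne a)
  have hbad : (1:ℂ) = 0 := by
    calc (1:ℂ) = μ.1 (fun _ => 1) := hone.symm
      _ = μ.1 (H * fun a => (H a)⁻¹) := by rw [hprod]
      _ = μ.1 H * μ.1 (fun a => (H a)⁻¹) := hmul _ hHmem _ hK
      _ = 0 := by rw [hμH, zero_mul]
  exact one_ne_zero hbad

end MVProof

/-- `A` is introverted if and only if for every `f ∈ A` the closure,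
in the topology of pointwise convergence, of the orbit `{τ_a f : a ∈ ℝ^N}` within
`BUC(ℝ^N)` is contained in `A`. -/
theorem stmt1 {N : ℕ} (A : MVAlgebra N) :
    Introverted A ↔
      ∀ f ∈ A.carrier, ∀ g : RN N → ℂ, IsBUC g →
        g ∈ closure {h : RN N → ℂ | ∃ a : RN N, h = fun x => f (x + a)} →
        g ∈ A.carrier := by
  constructor
  · -- introverted → closure of orbit ⊆ A
    intro hIntro f hf g _hg hgc
    classical
    obtain ⟨U, hSU, hUg⟩ := mem_closure_iff_ultrafilter.1 hgc
    set r : (RN N → ℂ) → RN N :=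
      fun h => if hh : ∃ a : RN N, h = fun x => f (x + a) then hh.choose else 0 with hr
    set V : Ultrafilter (RN N) := U.map r with hV
    have hVconv : ∀ x : RN N, Filter.Tendsto (fun a : RN N => f (x + a)) ↑V (𝓝 (g x)) := by
      intro x
      have h1 : Filter.Tendsto (fun h : RN N → ℂ => h x) ↑U (𝓝 (g x)) :=
        ((continuous_apply x).tendsto g).mono_left hUg
      have h2 : (fun h : RN N → ℂ => f (x + r h)) =ᶠ[↑U] (fun h => h x) := by
        filter_upwards [hSU] with h hh
        have hspec := hh.choose_spec
        rw [hr]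
        simp only [dif_pos hh]
        conv_rhs => rw [hspec]
      have h3 : Filter.Tendsto (fun h : RN N → ℂ => f (x + r h)) ↑U (𝓝 (g x)) :=
        (Filter.tendsto_congr' h2).2 h1
      rw [hV, Ultrafilter.coe_map, Filter.tendsto_map'_iff]
      exact h3
    have conv : ∀ u : RN N → ℂ, u ∈ A.carrier → ∃ L : ℂ, Filter.Tendsto u ↑V (𝓝 L) := by
      intro u hu
      obtain ⟨C, hC⟩ := isBounded_iff_forall_norm_le.1 (A.buc u hu).1
      have hK : IsCompact (Metric.closedBall (0:ℂ) C) := isCompact_closedBall _ _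
      have hle : ↑(V.map u) ≤ Filter.principal (Metric.closedBall (0:ℂ) C) := by
        rw [Filter.le_principal_iff, Ultrafilter.coe_map, Filter.mem_map]
        refine Filter.univ_mem' (fun a => ?_)
        simp only [Set.mem_preimage, Metric.mem_closedBall, dist_zero_right]
        exact hC _ (Set.mem_range_self a)
      obtain ⟨L, _, hL⟩ := hK.ultrafilter_le_nhds (V.map u) hle
      exact ⟨L, by rwa [Ultrafilter.coe_map] at hL⟩
    set μf : (RN N → ℂ) → ℂ :=
      fun u => if hu : u ∈ A.carrier then (conv u hu).choose else 0 with hμf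
    have hspec : ∀ u (hu : u ∈ A.carrier), Filter.Tendsto u ↑V (𝓝 (μf u)) := by
      intro u hu
      rw [hμf]
      simp only [dif_pos hu]
      exact (conv u hu).choose_spec
    have hchar : IsCharacter A μf := by
      refine ⟨?_, ?_, ?_, ?_, ?_, ?_⟩
      · intro p hp q hq
        exact tendsto_nhds_unique (hspec _ (A.add_mem _ hp _ hq)) ((hspec _ hp).add (hspec _ hq))
      · intro c p hp
        exact tendsto_nhds_unique (hspec _ (A.smul_mem c _ hp)) ((hspec _ hp).const_mul c)
      · intro p hp q hq
        exact tendsto_nhds_unique (hspec _ (A.mul_mem _ hp _ hq)) ((hspec _ hp).mul (hspec _ hq))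
      · exact tendsto_nhds_unique (hspec _ (A.const_mem 1)) tendsto_const_nhds
      · intro p hp
        rw [hμf]
        simp only [dif_neg hp]
      · intro p hp C hC
        exact le_of_tendsto' (hspec _ hp).norm (fun a => hC a)
    have hT := hIntro ⟨μf, hchar⟩ f hf
    have heq : (fun x => μf (fun z => f (z + x))) = g := by
      funext x
      have h1 : Filter.Tendsto (fun a => f (a + x)) ↑V (𝓝 (μf (fun z => f (z + x)))) :=
        hspec _ (A.translate_mem f hf x)
      have he : (fun a : RN N => f (a + x)) = fun a => f (x + a) := by
        funext a; rw [add_comm]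
      have h2 := hVconv x
      rw [← he] at h2
      exact tendsto_nhds_unique h1 h2
    rwa [heq] at hT
  · -- closure hypothesis → introverted
    intro hcl μ f hf
    obtain ⟨hadd, hsmul, hmul, hone, hzero, hbd⟩ := μ.2
    obtain ⟨C, hC⟩ := isBounded_iff_forall_norm_le.1 (A.buc f hf).1
    have hCf : ∀ z, ‖f z‖ ≤ C := fun z => hC _ (Set.mem_range_self z)
    set T : RN N → ℂ := fun x => μ.1 (fun z => f (z + x)) with hTdef
    have hTb : ∀ x, ‖T x‖ ≤ C :=
      fun x => hbd _ (A.translate_mem f hf x) C (fun z => hCf _)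
    have hTuc : UniformContinuous T := by
      rw [Metric.uniformContinuous_iff]
      intro ε hε
      obtain ⟨δ, hδ, hfd⟩ := Metric.uniformContinuous_iff.1 (A.buc f hf).2 (ε/2) (half_pos hε)
      refine ⟨δ, hδ, fun x y hxy => ?_⟩
      have hmem1 := A.translate_mem f hf x
      have hmem2 := A.translate_mem f hf y
      have hmem2' := A.smul_mem (-1 : ℂ) _ hmem2
      set d : RN N → ℂ := (fun z => f (z + x)) + (-1 : ℂ) • (fun z => f (z + y)) with hd
      have hdmem : d ∈ A.carrier := A.add_mem _ hmem1 _ hmem2'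
      have hdval : ∀ z, ‖d z‖ ≤ ε/2 := by
        intro z
        have hz : d z = f (z + x) - f (z + y) := by
          simp only [hd, Pi.add_apply, Pi.smul_apply, smul_eq_mul]
          ring
        rw [hz, ← dist_eq_norm]
        have hlt : dist (z + x) (z + y) < δ := by rwa [dist_add_left]
        exact (hfd hlt).le
      have hμd : μ.1 d = T x - T y := by
        rw [hd, hadd _ hmem1 _ hmem2', hsmul (-1 : ℂ) _ hmem2, hTdef]
        ring
      calc dist (T x) (T y) = ‖T x - T y‖ := dist_eq_norm _ _
        _ = ‖μ.1 d‖ := by rw [hμd]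
        _ ≤ ε/2 := hbd _ hdmem _ hdval
        _ < ε := half_lt_self hε
    have hTbuc : IsBUC T := by
      constructor
      · exact isBounded_iff_forall_norm_le.2 ⟨C, fun z hz => by
          obtain ⟨x, rfl⟩ := hz; exact hTb x⟩
      · exact hTuc
    have hTcl : T ∈ closure {h : RN N → ℂ | ∃ a : RN N, h = fun x => f (x + a)} := by
      apply MVProof.mem_closure_pi
      intro F ε hε
      obtain ⟨a, ha⟩ := MVProof.approx A μ hf F hε
      exact ⟨_, ⟨a, rfl⟩, fun x hx => ha x hx⟩
    exact hcl f hf T hTbuc hTcl
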